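/- Let 1 ≤ p < n, let P be a convex polytope in ℝ^n with 0 in its interior, and for k ≥ 1 set P_k = λ_k P with λ_k = (k^p / φ(1/k))^{1/n}, where φ(x) → ∞ as x → 0⁺. Then the functions f_k = ℓ_{P_k}/k converge to 0 in W^{1,p}(ℝ^n): both ‖f_k‖_p^p = c_{n,p}|P|/φ(1/k) → 0 and ‖∇f_k‖_p^p = (1/n) S_p(P) k^{−p²/n} φ(1/k)^{(p−n)/n} → 0 as k → ∞. -/

import Mathlib

open MeasureTheory Real Filter Pointwise


lemma betaReal (u v : ℝ) (hu : 0 < u) (hv : 0 < v) :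
    ∫ t in (0:ℝ)..1, t ^ (u - 1) * (1 - t) ^ (v - 1) =
      Real.Gamma u * Real.Gamma v / Real.Gamma (u + v) := by
  have h := Complex.Gamma_mul_Gamma_eq_betaIntegral (s := (u:ℂ)) (t := (v:ℂ))
    (by simpa using hu) (by simpa using hv)
  have hint : Complex.betaIntegral u v
      = ((∫ t in (0:ℝ)..1, t ^ (u - 1) * (1 - t) ^ (v - 1) : ℝ) : ℂ) := by
    rw [Complex.betaIntegral]
    have hcg : (∫ x : ℝ in (0:ℝ)..1, (x:ℂ) ^ ((u:ℂ)-1) * (1-(x:ℂ))^((v:ℂ)-1))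
        = ∫ x : ℝ in (0:ℝ)..1, ((x ^ (u-1) * (1-x)^(v-1) : ℝ) : ℂ) := by
      refine intervalIntegral.integral_congr fun x hx => ?_
      rw [Set.uIcc_of_le (zero_le_one), Set.mem_Icc] at hx
      rw [Complex.ofReal_mul, Complex.ofReal_cpow hx.1,
        Complex.ofReal_cpow (by linarith : (0:ℝ) ≤ 1 - x)]
      push_cast
      ring
    rw [hcg]; exact RCLike.intervalIntegral_ofReal
  rw [hint, ← Complex.ofReal_add, Complex.Gamma_ofReal, Complex.Gamma_ofReal,
    Complex.Gamma_ofReal, ← Complex.ofReal_mul, ← Complex.ofReal_mul] at h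
  have h3 := Complex.ofReal_inj.mp h
  have hΓ : Real.Gamma (u + v) ≠ 0 := (Real.Gamma_pos_of_pos (by linarith)).ne'
  rw [eq_div_iff hΓ]
  linarith [h3]

section fd
variable {E : Type*} [NormedAddCommGroup E] [NormedSpace ℝ E]

lemma fderiv_comp_clequiv (iso : E ≃L[ℝ] E) (f : E → ℝ) (x : E) :
    fderiv ℝ (fun y => f (iso y)) x = (fderiv ℝ f (iso x)).comp (iso : E →L[ℝ] E) := by
  by_cases h : DifferentiableAt ℝ f (iso x)
  · exact (h.hasFDerivAt.comp x iso.hasFDerivAt).fderiv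
  · have h2 : ¬ DifferentiableAt ℝ (fun y => f (iso y)) x := by
      intro hc
      apply h
      have hdc : DifferentiableAt ℝ ((fun y => f (iso y)) ∘ (iso.symm : E → E)) (iso x) :=
        DifferentiableAt.comp _ (by simpa using hc) iso.symm.differentiableAt
      have heq : ((fun y => f (iso y)) ∘ (iso.symm : E → E)) = f :=
        funext fun y => by simp
      rwa [heq] at hdc
    rw [fderiv_zero_of_not_differentiableAt h, fderiv_zero_of_not_differentiableAt h2,
      ContinuousLinearMap.zero_comp]

lemma norm_fderiv_mul_smul [FiniteDimensional ℝ E] (g : E → ℝ) (a b : ℝ)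
    (ha : 0 < a) (hb : 0 < b) (x : E) :
    ‖fderiv ℝ (fun y => b * g (a • y)) x‖ = b * (a * ‖fderiv ℝ g (a • x)‖) := by
  set iso : E ≃L[ℝ] E := (LinearEquiv.smulOfNeZero ℝ E a ha.ne').toContinuousLinearEquiv with hisodef
  set isoR : ℝ ≃L[ℝ] ℝ := (LinearEquiv.smulOfNeZero ℝ ℝ b hb.ne').toContinuousLinearEquiv with hisoRdef
  have hiso : ∀ y : E, iso y = a • y := fun y => rfl
  have hisoR : ∀ y : ℝ, isoR y = b * y := fun y => rfl
  have h1 : (fun y => b * g (a • y)) = (isoR ∘ fun y => g (iso y)) := by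
    funext y; simp [hiso, hisoR]
  rw [h1, ContinuousLinearEquiv.comp_fderiv, fderiv_comp_clequiv]
  have e : (isoR : ℝ →L[ℝ] ℝ).comp ((fderiv ℝ g (iso x)).comp (iso : E →L[ℝ] E))
      = (b * a) • (fderiv ℝ g (iso x)) := by
    ext v
    simp only [ContinuousLinearMap.comp_apply, ContinuousLinearEquiv.coe_coe,
      ContinuousLinearMap.smul_apply, hiso, hisoR, _root_.map_smul, smul_eq_mul]
    ring
  rw [e, norm_smul, hiso, Real.norm_eq_abs, abs_of_pos (by positivity : (0:ℝ) < b * a)]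
  ring

end fd

open intervalIntegral in
lemma ell_int {n : ℕ} (hn : 0 < n) {p : ℝ} (hp : 1 ≤ p)
    {P : Set (EuclideanSpace ℝ (Fin n))} (hconv : Convex ℝ P) (hcomp : IsCompact P)
    (h0 : 0 ∈ interior P) :
    ∫ x, (max 0 (1 - gauge P x)) ^ p =
      Real.Gamma (p + 1) * Real.Gamma (n + 1) / Real.Gamma (n + p + 1) * (volume P).toReal := by
  have hp0 : (0:ℝ) < p := lt_of_lt_of_le zero_lt_one hp
  set ℓ : EuclideanSpace ℝ (Fin n) → ℝ := fun x => max 0 (1 - gauge P x) with hℓ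
  have hnhds : P ∈ nhds (0 : EuclideanSpace ℝ (Fin n)) := mem_interior_iff_mem_nhds.mp h0
  have hℓc : Continuous ℓ :=
    continuous_const.max (continuous_const.sub (continuous_gauge hconv hnhds))
  have hℓnn : ∀ x, 0 ≤ ℓ x := fun x => le_max_left _ _
  have hℓ1 : ∀ x, ℓ x ≤ 1 := fun x => max_le zero_le_one (by linarith [gauge_nonneg (s := P) x])
  set V := (volume P).toReal with hVdef
  have hVfin : volume P ≠ ⊤ := hcomp.measure_lt_top.ne
  have hV : volume P = ENNReal.ofReal V := (ENNReal.ofReal_toReal hVfin).symm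
  have hVnn : 0 ≤ V := ENNReal.toReal_nonneg
  have hint_vol : volume (interior P) = volume P := by
    refine le_antisymm (measure_mono interior_subset) ?_
    calc volume P ≤ volume (interior P ∪ frontier P) := measure_mono (by
          rw [← closure_eq_interior_union_frontier]; exact subset_closure)
      _ ≤ volume (interior P) + volume (frontier P) := measure_union_le _ _
      _ = volume (interior P) := by rw [hconv.addHaar_frontier volume, add_zero]
  have hmeas : ∀ t ∈ Set.Ioo (0:ℝ) 1,
      volume {x | t < ℓ x} = ENNReal.ofReal ((1-t)^n * V) := by
    intro t ht
    have hst : (0:ℝ) < 1 - t := by linarith [ht.2]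
    have hset : {x | t < ℓ x} = (1 - t) • interior P := by
      ext x
      simp only [Set.mem_setOf_eq, hℓ, lt_max_iff]
      rw [Set.mem_smul_set_iff_inv_smul_mem₀ hst.ne',
        ← gauge_lt_one_iff_mem_interior hconv hnhds,
        gauge_smul_of_nonneg (inv_nonneg.2 hst.le), smul_eq_mul, inv_mul_eq_div, div_lt_one hst]
      constructor
      · rintro (h | h)
        · exact absurd h (not_lt.2 ht.1.le)
        · linarith
      · intro h; right; linarith
    rw [hset, Measure.addHaar_smul_of_nonneg volume hst.le, hint_vol,
      finrank_euclideanSpace_fin, hV]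
    exact (ENNReal.ofReal_mul (pow_nonneg hst.le n)).symm
  have hprim : ∀ a : ℝ, 0 ≤ a → (∫ t in (0:ℝ)..a, p * t ^ (p-1)) = a ^ p := by
    intro a ha
    rw [intervalIntegral.integral_const_mul, integral_rpow (Or.inl (by linarith))]
    have h1 : p - 1 + 1 = p := by ring
    rw [h1, Real.zero_rpow (by linarith : p ≠ 0)]
    field_simp
    rw [sub_zero]
  have hg_int : ∀ t > (0:ℝ), IntervalIntegrable (fun t => p * t ^ (p-1)) volume 0 t :=
    fun t _ => (intervalIntegrable_rpow' (by linarith)).const_mul p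
  have hg_nn : ∀ᵐ t ∂(volume.restrict (Set.Ioi (0:ℝ))), 0 ≤ p * t ^ (p-1) := by
    filter_upwards [ae_restrict_mem measurableSet_Ioi] with t ht
    have h1 : (0:ℝ) < t := ht
    positivity
  have hlc := lintegral_comp_eq_lintegral_meas_lt_mul volume (f := ℓ)
    (g := fun t => p * t ^ (p-1)) (Filter.Eventually.of_forall hℓnn) hℓc.aemeasurable hg_int hg_nn
  have hLHS : ∫⁻ x, ENNReal.ofReal (ℓ x ^ p) = ∫⁻ t in Set.Ioi (0:ℝ),
      volume {a | t < ℓ a} * ENNReal.ofReal (p * t ^ (p-1)) := by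
    rw [← hlc]
    exact lintegral_congr fun x => by rw [hprim (ℓ x) (hℓnn x)]
  set B : ℝ := ∫ t in (0:ℝ)..1, t ^ (p-1) * (1-t)^n with hBdef
  have hIoo : (∫ t in Set.Ioo (0:ℝ) 1, V * p * (t ^ (p-1) * (1-t)^n)) = V * p * B := by
    rw [MeasureTheory.integral_const_mul, hBdef, integral_of_le zero_le_one,
      integral_Ioc_eq_integral_Ioo]
  have hB_int : IntegrableOn (fun t => V * p * (t ^ (p-1) * (1-t)^n)) (Set.Ioo (0:ℝ) 1) volume := by
    have h1 : IntervalIntegrable (fun t : ℝ => t ^ (p-1) * (1-t)^n) volume 0 1 := by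
      apply IntervalIntegrable.mul_continuousOn
        (intervalIntegrable_rpow' (by linarith))
      exact ((continuous_const.sub continuous_id).pow n).continuousOn
    exact (h1.const_mul (V * p)).1.mono_set Set.Ioo_subset_Ioc_self
  have hpt : ∀ t, t ∈ Set.Ioo (0:ℝ) 1 →
      volume {a | t < ℓ a} * ENNReal.ofReal (p * t ^ (p-1))
        = ENNReal.ofReal (V * p * (t ^ (p-1) * (1-t)^n)) := by
    intro t ht
    rw [hmeas t ht, ← ENNReal.ofReal_mul (mul_nonneg (pow_nonneg (by linarith [ht.2]) n) hVnn)]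
    congr 1
    ring
  have hRHS : (∫⁻ t in Set.Ioi (0:ℝ), volume {a | t < ℓ a} * ENNReal.ofReal (p * t ^ (p-1)))
      = ENNReal.ofReal (V * p * B) := by
    rw [← Set.Ioo_union_Ici_eq_Ioi (zero_lt_one (α := ℝ)),
      lintegral_union measurableSet_Ici
        ((Set.Iio_disjoint_Ici le_rfl).mono_left Set.Ioo_subset_Iio_self)]
    have hzero : (∫⁻ t in Set.Ici (1:ℝ),
        volume {a | t < ℓ a} * ENNReal.ofReal (p * t ^ (p-1))) = 0 := by
      have hz : ∀ t, t ∈ Set.Ici (1:ℝ) →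
          volume {a | t < ℓ a} * ENNReal.ofReal (p * t ^ (p-1)) = 0 := by
        intro t ht
        have : {a | t < ℓ a} = ∅ := Set.eq_empty_iff_forall_notMem.2 fun a ha =>
          absurd ha (not_lt.2 ((hℓ1 a).trans ht))
        rw [this]
        simp
      rw [setLIntegral_congr_fun measurableSet_Ici (fun t ht => hz t ht),
        lintegral_zero]
    have hnn : 0 ≤ᵐ[volume.restrict (Set.Ioo (0:ℝ) 1)]
        fun t => V * p * (t ^ (p-1) * (1-t)^n) := by
      filter_upwards [ae_restrict_mem measurableSet_Ioo] with t ht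
      have h1 : (0:ℝ) ≤ t := ht.1.le
      have h2 : (0:ℝ) ≤ 1 - t := by linarith [ht.2]
      positivity
    rw [hzero, add_zero,
      setLIntegral_congr_fun measurableSet_Ioo (fun t ht => hpt t ht),
      ← MeasureTheory.ofReal_integral_eq_lintegral_ofReal hB_int hnn, hIoo]
  have hBval : B = Real.Gamma p * Real.Gamma ((n:ℝ)+1) / Real.Gamma (p + ((n:ℝ)+1)) := by
    have hb := betaReal p ((n:ℝ)+1) hp0 (by positivity)
    rw [show ((n:ℝ)+1)-1 = (n:ℝ) by ring] at hb
    simp_rw [Real.rpow_natCast] at hb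
    rw [hBdef]
    exact hb
  have hBnn : 0 ≤ B := by
    rw [hBval]
    have h1 := Real.Gamma_pos_of_pos hp0
    have h2 : (0:ℝ) < Real.Gamma ((n:ℝ)+1) := Real.Gamma_pos_of_pos (by positivity)
    have h3 : (0:ℝ) < Real.Gamma (p + ((n:ℝ)+1)) := Real.Gamma_pos_of_pos (by positivity)
    positivity
  rw [MeasureTheory.integral_eq_lintegral_of_nonneg_ae
    (Filter.Eventually.of_forall fun x => Real.rpow_nonneg (hℓnn x) p)
    ((hℓc.rpow_const (fun x => Or.inr hp0.le)).aestronglyMeasurable)]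
  rw [hLHS, hRHS, ENNReal.toReal_ofReal (mul_nonneg (mul_nonneg hVnn hp0.le) hBnn)]
  rw [hBval, Real.Gamma_add_one hp0.ne', show p + ((n:ℝ)+1) = (n:ℝ)+p+1 by ring]
  ring

/-- Let `1 ≤ p < n`, `P` a convex polytope with `0` in its interior,
`φ(x) → ∞` as `x → 0⁺`, `λ_k = (k^p/φ(1/k))^{1/n}`, `P_k = λ_k P` and
`f_k = ℓ_{P_k}/k`. Then `‖f_k‖_p^p = c_{n,p}|P|/φ(1/k) → 0` and
`‖∇f_k‖_p^p = (1/n) S_p(P) k^{-p²/n} φ(1/k)^{(p-n)/n} → 0`, where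
`S_p(P) = n ∫ ‖∇ℓ_P‖^p`; so `f_k → 0` in `W^{1,p}(ℝⁿ)`. -/
theorem stmt11 (n : ℕ) (hn : 0 < n) (p : ℝ) (hp : 1 ≤ p) (hpn : p < n)
    (P : Set (EuclideanSpace ℝ (Fin n)))
    (hpoly : ∃ V : Finset (EuclideanSpace ℝ (Fin n)),
      P = convexHull ℝ (V : Set (EuclideanSpace ℝ (Fin n))))
    (h0 : 0 ∈ interior P)
    (φ : ℝ → ℝ) (hφpos : ∀ x, 0 < φ x)
    (hφ : Tendsto φ (nhdsWithin 0 (Set.Ioi 0)) atTop)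
    (lP : Set (EuclideanSpace ℝ (Fin n)) → EuclideanSpace ℝ (Fin n) → ℝ)
    (hlP : ∀ Q x, lP Q x = max 0 (1 - gauge Q x))
    (lam : ℕ → ℝ)
    (hlam : ∀ k : ℕ, lam k = ((k : ℝ) ^ p / φ (1 / k)) ^ (1 / (n : ℝ)))
    (fk : ℕ → EuclideanSpace ℝ (Fin n) → ℝ)
    (hfk : ∀ (k : ℕ) x, fk k x = lP (lam k • P) x / k)
    (Sp : ℝ) (hSp : Sp = n * ∫ x, ‖fderiv ℝ (lP P) x‖ ^ p) :
    (∀ k : ℕ, 1 ≤ k →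
      ∫ x, (fk k x) ^ p =
        (Real.Gamma (p + 1) * Real.Gamma (n + 1) / Real.Gamma (n + p + 1)) *
          (volume P).toReal / φ (1 / k)) ∧
    Tendsto (fun k : ℕ => ∫ x, (fk k x) ^ p) atTop (nhds 0) ∧
    (∀ k : ℕ, 1 ≤ k →
      ∫ x, ‖fderiv ℝ (fk k) x‖ ^ p =
        (1 / n) * Sp * (k : ℝ) ^ (-(p ^ 2) / n) * (φ (1 / k)) ^ ((p - n) / n)) ∧
    Tendsto (fun k : ℕ => ∫ x, ‖fderiv ℝ (fk k) x‖ ^ p) atTop (nhds 0) := by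
  obtain ⟨Vs, hVs⟩ := hpoly
  have hconv : Convex ℝ P := hVs ▸ convex_convexHull ℝ _
  have hcomp : IsCompact P := hVs ▸ (Vs.finite_toSet.isCompact_convexHull (𝕜 := ℝ))
  have hn0 : ((n : ℕ) : ℝ) ≠ 0 := Nat.cast_ne_zero.2 hn.ne'
  have hnpos : (0:ℝ) < (n:ℝ) := by exact_mod_cast hn
  set g : EuclideanSpace ℝ (Fin n) → ℝ := fun x => max 0 (1 - gauge P x) with hgdef
  have hgP : lP P = g := funext fun x => hlP P x
  set C : ℝ := Real.Gamma (p + 1) * Real.Gamma ((n:ℝ) + 1) / Real.Gamma ((n:ℝ) + p + 1)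
    with hCdef
  have hI0 : ∫ x, g x ^ p = C * (volume P).toReal := ell_int hn hp hconv hcomp h0
  set J : ℝ := ∫ x, ‖fderiv ℝ g x‖ ^ p with hJdef
  have hSpJ : Sp = (n:ℝ) * J := by rw [hSp, hgP]
  -- per-k setup
  have setup : ∀ k : ℕ, 1 ≤ k →
      (0:ℝ) < (k:ℝ) ∧ 0 < φ (1/(k:ℝ)) ∧ 0 < lam k ∧
      (lam k) ^ (n:ℕ) = (k:ℝ)^p / φ (1/(k:ℝ)) ∧
      (∀ x, fk k x = g ((lam k)⁻¹ • x) / (k:ℝ)) := by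
    intro k hk
    have ha : (0:ℝ) < (k:ℝ) := by exact_mod_cast hk
    have hb : 0 < φ (1/(k:ℝ)) := hφpos _
    have hd : (0:ℝ) < (k:ℝ)^p / φ (1/(k:ℝ)) := div_pos (Real.rpow_pos_of_pos ha p) hb
    have hcd : lam k = ((k:ℝ)^p / φ (1/(k:ℝ))) ^ ((n:ℝ)⁻¹) := by rw [hlam, one_div ((n:ℝ))]
    have hc : 0 < lam k := hcd ▸ Real.rpow_pos_of_pos hd _
    refine ⟨ha, hb, hc, ?_, ?_⟩
    · rw [hcd, ← Real.rpow_natCast (((k:ℝ)^p / φ (1/(k:ℝ))) ^ ((n:ℝ)⁻¹)) n,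
        ← Real.rpow_mul hd.le, inv_mul_cancel₀ hn0, Real.rpow_one]
    · intro x
      rw [hfk, hlP, hgdef]
      have hgg : gauge (lam k • P) x = gauge P ((lam k)⁻¹ • x) := by
        rw [gauge_smul_left_of_nonneg hc.le, gauge_smul_of_nonneg (inv_nonneg.2 hc.le)]
        simp
      rw [hgg]
  have part1 : ∀ k : ℕ, 1 ≤ k →
      ∫ x, (fk k x) ^ p = C * (volume P).toReal / φ (1/(k:ℝ)) := by
    intro k hk
    obtain ⟨ha, hb, hc, hcn, hgk⟩ := setup k hk
    have hfun : (fun x => fk k x ^ p)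
        = fun x => (g ((lam k)⁻¹ • x))^p / (k:ℝ)^p := funext fun x => by
      rw [hgk x, Real.div_rpow (le_max_left _ _) ha.le]
    rw [hfun, integral_div]
    have hcv := Measure.integral_comp_inv_smul volume (fun y => g y ^ p) (lam k)
    rw [finrank_euclideanSpace_fin, smul_eq_mul, abs_of_pos (pow_pos hc n)] at hcv
    rw [hcv, hI0, hcn]
    have hap : (0:ℝ) < (k:ℝ)^p := Real.rpow_pos_of_pos ha p
    field_simp
  have part3 : ∀ k : ℕ, 1 ≤ k →
      ∫ x, ‖fderiv ℝ (fk k) x‖ ^ p =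
        (1 / (n:ℝ)) * Sp * (k:ℝ) ^ (-(p^2)/(n:ℝ)) * (φ (1/(k:ℝ))) ^ ((p-(n:ℝ))/(n:ℝ)) := by
    intro k hk
    obtain ⟨ha, hb, hc, hcn, hgk⟩ := setup k hk
    have hd : (0:ℝ) < (k:ℝ)^p / φ (1/(k:ℝ)) := div_pos (Real.rpow_pos_of_pos ha p) hb
    have hcd : lam k = ((k:ℝ)^p / φ (1/(k:ℝ))) ^ ((n:ℝ)⁻¹) := by rw [hlam, one_div ((n:ℝ))]
    have hffun : fk k = fun x => ((k:ℝ))⁻¹ * g ((lam k)⁻¹ • x) :=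
      funext fun x => by rw [hgk x, div_eq_inv_mul]
    rw [hffun]
    have hnorm : (fun x => ‖fderiv ℝ (fun y => ((k:ℝ))⁻¹ * g ((lam k)⁻¹ • y)) x‖ ^ p)
        = fun x => ((k:ℝ)⁻¹)^p * ((lam k)⁻¹)^p * ‖fderiv ℝ g ((lam k)⁻¹ • x)‖ ^ p := by
      funext x
      rw [norm_fderiv_mul_smul g (lam k)⁻¹ ((k:ℝ))⁻¹ (inv_pos.2 hc) (inv_pos.2 ha) x,
        Real.mul_rpow (by positivity) (by positivity),
        Real.mul_rpow (by positivity) (norm_nonneg _), mul_assoc]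
    rw [hnorm]
    simp_rw [mul_assoc]
    rw [MeasureTheory.integral_const_mul, MeasureTheory.integral_const_mul]
    have hcv := Measure.integral_comp_inv_smul volume (fun y => ‖fderiv ℝ g y‖ ^ p) (lam k)
    rw [finrank_euclideanSpace_fin, smul_eq_mul, abs_of_pos (pow_pos hc n)] at hcv
    rw [hcv, ← hJdef]
    have key : ((k:ℝ)⁻¹)^p * (((lam k)⁻¹)^p * (lam k)^(n:ℕ)) =
        (k:ℝ)^(-(p^2)/(n:ℝ)) * (φ (1/(k:ℝ)))^((p-(n:ℝ))/(n:ℝ)) := by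
      have e2 : ((lam k)⁻¹)^p * (lam k)^(n:ℕ)
          = ((k:ℝ)^p / φ (1/(k:ℝ))) ^ (((n:ℝ)-p)/(n:ℝ)) := by
        rw [Real.inv_rpow hc.le, ← Real.rpow_neg hc.le, ← Real.rpow_natCast (lam k) n,
          ← Real.rpow_add hc, hcd, ← Real.rpow_mul hd.le]
        congr 1
        rw [div_eq_inv_mul]
        ring
      rw [e2, Real.div_rpow (Real.rpow_nonneg ha.le p) hb.le, ← Real.rpow_mul ha.le,
        Real.inv_rpow ha.le, ← Real.rpow_neg ha.le, div_eq_mul_inv,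
        ← Real.rpow_neg (hφpos _).le, ← mul_assoc, ← Real.rpow_add ha]
      congr 1
      · congr 1
        field_simp
        ring
      · congr 1
        field_simp
        ring
    calc ((k:ℝ)⁻¹)^p * (((lam k)⁻¹)^p * ((lam k)^(n:ℕ) * J))
        = (((k:ℝ)⁻¹)^p * (((lam k)⁻¹)^p * (lam k)^(n:ℕ))) * J := by ring
      _ = ((k:ℝ)^(-(p^2)/(n:ℝ)) * (φ (1/(k:ℝ)))^((p-(n:ℝ))/(n:ℝ))) * J := by rw [key]
      _ = (1 / (n:ℝ)) * (Sp * ((k:ℝ)^(-(p^2)/(n:ℝ)) * (φ (1/(k:ℝ)))^((p-(n:ℝ))/(n:ℝ)))) := by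
          have hJ' : (1:ℝ) / (n:ℝ) * Sp = J := by
            rw [hSpJ, one_div]
            exact inv_mul_cancel_left₀ hn0 J
          rw [← hJ']
          ring
  -- limits
  have hφk : Tendsto (fun k : ℕ => φ (1/(k:ℝ))) atTop atTop := by
    refine hφ.comp (tendsto_nhdsWithin_of_tendsto_nhds_of_eventually_within _
      tendsto_one_div_atTop_nhds_zero_nat ?_)
    filter_upwards [eventually_gt_atTop 0] with k hk
    have hk' : (0:ℝ) < (k:ℝ) := by exact_mod_cast hk
    exact one_div_pos.2 hk'
  have t2 : Tendsto (fun k : ℕ => ∫ x, (fk k x) ^ p) atTop (nhds 0) := by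
    have h := hφk.inv_tendsto_atTop.const_mul (C * (volume P).toReal)
    rw [mul_zero] at h
    refine Tendsto.congr' ?_ h
    filter_upwards [eventually_ge_atTop 1] with k hk
    rw [part1 k hk, div_eq_mul_inv]
    rfl
  have ht1 : Tendsto (fun k : ℕ => ((k:ℝ))^(-(p^2)/(n:ℝ))) atTop (nhds 0) := by
    have h := (tendsto_rpow_neg_atTop (y := p^2/(n:ℝ)) (by positivity)).comp
      tendsto_natCast_atTop_atTop
    simpa only [Function.comp_def, ← neg_div] using h
  have ht2 : Tendsto (fun k : ℕ => (φ (1/(k:ℝ)))^((p-(n:ℝ))/(n:ℝ))) atTop (nhds 0) := by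
    have h := (tendsto_rpow_neg_atTop (y := ((n:ℝ)-p)/(n:ℝ))
      (div_pos (by linarith) hnpos)).comp hφk
    simpa only [Function.comp_def, ← neg_div, neg_sub] using h
  have t4 : Tendsto (fun k : ℕ => ∫ x, ‖fderiv ℝ (fk k) x‖ ^ p) atTop (nhds 0) := by
    have h := (ht1.mul ht2).const_mul ((1/(n:ℝ)) * Sp)
    simp only [mul_zero] at h
    refine Tendsto.congr' ?_ h
    filter_upwards [eventually_ge_atTop 1] with k hk
    rw [part3 k hk]
    ring
  exact ⟨part1, t2, part3, t4⟩
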